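/- Let p ≥ 2 and let P(x) = x⁴ − a·x³ + b·x² − p·a·x + p² ∈ ℤ[x]. Define Q(x) = x² − a·x + (b − 2p) with discriminant Δ_Q = a² − 4(b − 2p), and let Δ be the discriminant of P. Let ℓ be an odd prime not dividing 2p, such that both Δ and Δ_Q are quadratic non-residues modulo ℓ. Then P is irreducible modulo ℓ. -/
import Mathlib


open Polynomial Finset

/-- The discriminant of the monic quartic `x⁴ − e1·x³ + e2·x² − e3·x + e4`. -/
def quarticDisc {R : Type*} [CommRing R] (e1 e2 e3 e4 : R) : R :=
  256*e4^3 - 192*e1*e3*e4^2 - 128*e2^2*e4^2 + 144*e2*e3^2*e4 - 27*e3^4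
  + 144*e1^2*e2*e4^2 - 6*e1^2*e3^2*e4 - 80*e1*e2^2*e3*e4 + 18*e1*e2*e3^3
  + 16*e2^4*e4 - 4*e2^3*e3^2 - 27*e1^4*e4^2 + 18*e1^3*e2*e3*e4 - 4*e1^3*e3^3
  - 4*e1^2*e2^3*e4 + e1^2*e2^2*e3^2

lemma quartic_disc_eq (r0 r1 r2 r3 : ℂ) :
    (r0-r1)^2 * (r0-r2)^2 * (r0-r3)^2 * ((r1-r2)^2 * (r1-r3)^2) * (r2-r3)^2
    = quarticDisc (r0+r1+r2+r3) (r0*r1+r0*r2+r0*r3+r1*r2+r1*r3+r2*r3)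
        (r0*r1*r2+r0*r1*r3+r0*r2*r3+r1*r2*r3) (r0*r1*r2*r3) := by
  unfold quarticDisc; ring

lemma quartic_disc_factor {F : Type*} [CommRing F] (s t u v e1 e2 e3 e4 : F)
    (h1 : e1 = -(s+u)) (h2 : e2 = t+v+s*u) (h3 : e3 = -(s*v+u*t)) (h4 : e4 = t*v) :
    quarticDisc e1 e2 e3 e4
      = (s^2-4*t) * (u^2-4*v) * ((u-s)^2*t - s*(u-s)*(v-t) + (v-t)^2)^2 := by
  subst h1 h2 h3 h4; unfold quarticDisc; ring

lemma quad_mul_expand {R : Type*} [CommRing R] (s t u v : R) :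
    (X^2 + C s * X + C t) * (X^2 + C u * X + C v)
    = X^4 + C (s+u) * X^3 + C (t+v+s*u) * X^2 + C (s*v+u*t) * X + C (t*v) := by
  simp only [C_add, C_mul]; ring

lemma prod_four_expand {R : Type*} [CommRing R] (r0 r1 r2 r3 : R) :
    (X - C r0) * (X - C r1) * (X - C r2) * (X - C r3)
    = X^4 + C (-(r0+r1+r2+r3)) * X^3 + C (r0*r1+r0*r2+r0*r3+r1*r2+r1*r3+r2*r3) * X^2
      + C (-(r0*r1*r2+r0*r1*r3+r0*r2*r3+r1*r2*r3)) * X + C (r0*r1*r2*r3) := by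
  simp only [C_add, C_mul, C_neg]; ring

lemma quartic_coeffs_eq {R : Type*} [CommRing R] {a3 a2 a1 a0 b3 b2 b1 b0 : R}
    (h : X^4 + C a3 * X^3 + C a2 * X^2 + C a1 * X + C a0
       = X^4 + C b3 * X^3 + C b2 * X^2 + C b1 * X + C b0) :
    a3 = b3 ∧ a2 = b2 ∧ a1 = b1 ∧ a0 = b0 := by
  refine ⟨?_, ?_, ?_, ?_⟩
  · have := congrArg (fun q => coeff q 3) h; simpa using this
  · have := congrArg (fun q => coeff q 2) h; simpa using this
  · have := congrArg (fun q => coeff q 1) h; simpa using this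
  · have := congrArg (fun q => coeff q 0) h; simpa using this

lemma eq_quadratic {R : Type*} [CommRing R] {f : R[X]} (hf : f.natDegree ≤ 2) :
    f = C (f.coeff 2) * X^2 + C (f.coeff 1) * X + C (f.coeff 0) := by
  ext n
  match n with
  | 0 => simp
  | 1 => simp [coeff_C]
  | 2 => simp [coeff_C]
  | (n+3) =>
    rw [coeff_eq_zero_of_natDegree_lt (lt_of_le_of_lt hf (by omega))]
    simp [coeff_C, coeff_X, coeff_X_pow]

lemma nonsquare_mul {F : Type*} [Field F] [Fintype F] [DecidableEq F] {x y : F}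
    (hx : ¬ IsSquare x) (hy : ¬ IsSquare y) : IsSquare (x * y) := by
  have hx0 : x ≠ 0 := fun h => hx (h ▸ ⟨0, by ring⟩)
  have hy0 : y ≠ 0 := fun h => hy (h ▸ ⟨0, by ring⟩)
  have h1 : quadraticChar F x = -1 := quadraticChar_neg_one_iff_not_isSquare.mpr hx
  have h2 : quadraticChar F y = -1 := quadraticChar_neg_one_iff_not_isSquare.mpr hy
  have h3 : quadraticChar F (x * y) = 1 := by rw [map_mul, h1, h2]; ring
  exact (quadraticChar_one_iff_isSquare (mul_ne_zero hx0 hy0)).mp h3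

/-- Irreducibility criterion mod `ℓ`: if both the discriminant `Δ` of the
palindromic quartic `P` and the discriminant `Δ_Q = a² − 4(b − 2p)` of the
auxiliary quadratic are quadratic non-residues modulo an odd prime `ℓ ∤ 2p`,
then `P` is irreducible modulo `ℓ`. Here `Δ` is characterized as the product of
squared differences of the complex roots of `P`. -/
theorem quartic_irreducible_mod_l (p : ℕ) (hp : 2 ≤ p) (a b : ℤ) (ℓ : ℕ)
    (hl : ℓ.Prime) (hodd : Odd ℓ) (hndvd : ¬ (ℓ : ℤ) ∣ 2 * p) (Δ : ℤ)
    (r : Fin 4 → ℂ)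
    (hroots : (X ^ 4 - C a * X ^ 3 + C b * X ^ 2 - C ((p : ℤ) * a) * X +
        C ((p : ℤ) ^ 2)).map (Int.castRingHom ℂ) = ∏ i : Fin 4, (X - C (r i)))
    (hΔ : (Δ : ℂ) = ∏ i : Fin 4, ∏ j ∈ univ.filter (fun j => i < j), (r i - r j) ^ 2)
    (hΔns : ¬ IsSquare ((Δ : ZMod ℓ)))
    (hΔQns : ¬ IsSquare (((a ^ 2 - 4 * (b - 2 * p) : ℤ) : ZMod ℓ))) :
    Irreducible ((X ^ 4 - C a * X ^ 3 + C b * X ^ 2 - C ((p : ℤ) * a) * X +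
      C ((p : ℤ) ^ 2)).map (Int.castRingHom (ZMod ℓ))) := by
  haveI : Fact ℓ.Prime := ⟨hl⟩
  haveI : NeZero ℓ := ⟨hl.ne_zero⟩
  set az : ZMod ℓ := ((a : ℤ) : ZMod ℓ) with haz
  set bz : ZMod ℓ := ((b : ℤ) : ZMod ℓ) with hbz
  set pz : ZMod ℓ := ((p : ℕ) : ZMod ℓ) with hpzdef
  -- basic non-vanishing facts
  have hpz : pz ≠ 0 := by
    intro h
    apply hndvd
    have : (ℓ : ℤ) ∣ (p : ℤ) := by
      exact_mod_cast Int.natCast_dvd_natCast.mpr ((ZMod.natCast_eq_zero_iff p ℓ).mp h)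
    exact Dvd.dvd.mul_left this 2
  have h2z : (2 : ZMod ℓ) ≠ 0 := by
    intro h
    have h2 : ((2 : ℕ) : ZMod ℓ) = 0 := by exact_mod_cast h
    have hdvd : ℓ ∣ 2 := (ZMod.natCast_eq_zero_iff 2 ℓ).mp h2
    have h2' : ℓ = 2 := (Nat.prime_dvd_prime_iff_eq hl Nat.prime_two).mp hdvd
    obtain ⟨k, hk⟩ := hodd
    omega
  -- the reduced polynomial in explicit form
  set Pm : (ZMod ℓ)[X] := (X ^ 4 - C a * X ^ 3 + C b * X ^ 2 - C ((p : ℤ) * a) * X +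
      C ((p : ℤ) ^ 2)).map (Int.castRingHom (ZMod ℓ)) with hPm
  have hPform : Pm = X^4 + C (-az) * X^3 + C bz * X^2 + C (-(pz*az)) * X + C (pz^2) := by
    rw [hPm]
    simp only [Polynomial.map_add, Polynomial.map_sub, Polynomial.map_mul, Polynomial.map_pow,
      map_X, map_C]
    simp only [eq_intCast, Int.cast_mul, Int.cast_pow, Int.cast_natCast]
    simp only [C_neg, C_mul, C_pow]
    ring
  -- Vieta over ℂ
  rw [Fin.prod_univ_four] at hroots
  have hL : (X ^ 4 - C a * X ^ 3 + C b * X ^ 2 - C ((p : ℤ) * a) * X +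
        C ((p : ℤ) ^ 2)).map (Int.castRingHom ℂ)
      = X^4 + C (-(a:ℂ)) * X^3 + C (b:ℂ) * X^2 + C (-((p:ℂ) * (a:ℂ))) * X + C ((p:ℂ)^2) := by
    simp only [Polynomial.map_add, Polynomial.map_sub, Polynomial.map_mul, Polynomial.map_pow,
      map_X, map_C]
    simp only [eq_intCast, Int.cast_mul, Int.cast_pow, Int.cast_natCast]
    simp only [C_neg, C_mul, C_pow]
    ring
  rw [hL, prod_four_expand] at hroots
  obtain ⟨hv1, hv2, hv3, hv4⟩ := quartic_coeffs_eq hroots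
  have he1 : (a : ℂ) = r 0 + r 1 + r 2 + r 3 := by linear_combination -hv1
  have he3 : (p : ℂ) * (a : ℂ) = r 0*r 1*r 2 + r 0*r 1*r 3 + r 0*r 2*r 3 + r 1*r 2*r 3 := by
    linear_combination -hv3
  -- the discriminant over ℂ
  have hDc : (Δ : ℂ) = quarticDisc (a : ℂ) (b : ℂ) ((p:ℂ) * (a:ℂ)) ((p:ℂ)^2) := by
    rw [hΔ, Fin.prod_univ_four]
    rw [show (univ.filter fun j => (0:Fin 4) < j) = {1,2,3} by decide,
        show (univ.filter fun j => (1:Fin 4) < j) = {2,3} by decide,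
        show (univ.filter fun j => (2:Fin 4) < j) = {3} by decide,
        show (univ.filter fun j => (3:Fin 4) < j) = ∅ by decide]
    rw [Finset.prod_insert (by decide), Finset.prod_insert (by decide),
        Finset.prod_insert (by decide), Finset.prod_singleton, Finset.prod_singleton,
        Finset.prod_singleton, Finset.prod_empty]
    rw [he3, hv4, he1, hv2]
    linear_combination quartic_disc_eq (r 0) (r 1) (r 2) (r 3)
  -- transfer the discriminant identity to ℤ and then to ZMod ℓ
  have hDint : Δ = quarticDisc a b ((p:ℤ) * a) ((p:ℤ)^2) := by
    have hcast : ((quarticDisc a b ((p:ℤ) * a) ((p:ℤ)^2) : ℤ) : ℂ)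
        = quarticDisc (a : ℂ) (b : ℂ) ((p:ℂ) * (a:ℂ)) ((p:ℂ)^2) := by
      unfold quarticDisc; push_cast; ring
    exact_mod_cast hDc.trans hcast.symm
  have hDz : (Δ : ZMod ℓ) = quarticDisc az bz (pz*az) (pz^2) := by
    rw [hDint]; unfold quarticDisc; push_cast; ring
  -- no roots mod ℓ
  have noRoot : ∀ z : ZMod ℓ, eval z Pm ≠ 0 := by
    intro z hz
    rw [hPform] at hz
    simp only [eval_add, eval_mul, eval_pow, eval_C, eval_X, eval_neg] at hz
    have h : z^4 - az*z^3 + bz*z^2 - pz*az*z + pz^2 = 0 := by linear_combination hz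
    have hQns : ¬ IsSquare (az^2 - 4*(bz - 2*pz)) := by
      have hc : ((a ^ 2 - 4 * (b - 2 * p) : ℤ) : ZMod ℓ) = az^2 - 4*(bz - 2*pz) := by
        push_cast; ring
      rw [hc] at hΔQns; exact hΔQns
    have hz0 : z ≠ 0 := by
      rintro rfl
      apply hpz
      have h2 : pz^2 = 0 := by linear_combination h
      exact pow_eq_zero_iff two_ne_zero |>.mp h2
    have hzz : z⁻¹ * z = 1 := inv_mul_cancel₀ hz0
    set y := z + pz * z⁻¹ with hy
    have key : (y^2 - az*y + (bz - 2*pz)) * z^2 = 0 := by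
      rw [hy]
      linear_combination h + (2*pz*z^2 + pz^2*z*z⁻¹ - az*pz*z + pz^2) * hzz
    have hQ : y^2 - az*y + (bz - 2*pz) = 0 := by
      rcases mul_eq_zero.mp key with h' | h'
      · exact h'
      · exact absurd (pow_eq_zero_iff two_ne_zero |>.mp h') hz0
    exact hQns ⟨az - 2*y, by linear_combination (-4 : ZMod ℓ) * hQ⟩
  -- degree facts
  have hdeg : Pm.natDegree = 4 := by rw [hPform]; compute_degree!
  have hPm0 : Pm ≠ 0 := by intro h; rw [h] at hdeg; simp at hdeg
  have hmon : Pm.Monic := by rw [hPform]; monicity!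
  -- root from a degree-one factor gives a contradiction
  have rootCase : ∀ f g : (ZMod ℓ)[X], Pm = f * g → f.natDegree = 1 → False := by
    intro f g hfg hdeg1
    have hf0 : f ≠ 0 := fun h => by simp [h] at hdeg1
    have hdegf : f.degree = 1 := by
      rw [degree_eq_natDegree hf0, hdeg1]; rfl
    obtain ⟨z, hz⟩ := exists_root_of_degree_eq_one hdegf
    apply noRoot z
    rw [hfg, eval_mul, show eval z f = 0 from hz, zero_mul]
  constructor
  · intro hunit
    have := natDegree_eq_zero_of_isUnit hunit
    rw [hdeg] at this; exact absurd this (by norm_num)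
  · intro f g hfg
    by_contra hcon
    push_neg at hcon
    obtain ⟨hfu, hgu⟩ := hcon
    have hf0 : f ≠ 0 := by rintro rfl; rw [zero_mul] at hfg; exact hPm0 hfg
    have hg0 : g ≠ 0 := by rintro rfl; rw [mul_zero] at hfg; exact hPm0 hfg
    have hsum : f.natDegree + g.natDegree = 4 := by
      rw [← natDegree_mul hf0 hg0, ← hfg, hdeg]
    have hfpos : f.natDegree ≠ 0 := by
      intro h
      apply hfu
      rw [eq_C_of_natDegree_eq_zero h]
      exact isUnit_C.mpr (isUnit_iff_ne_zero.mpr (fun hc => hf0 (by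
        rw [eq_C_of_natDegree_eq_zero h, hc, map_zero])))
    have hgpos : g.natDegree ≠ 0 := by
      intro h
      apply hgu
      rw [eq_C_of_natDegree_eq_zero h]
      exact isUnit_C.mpr (isUnit_iff_ne_zero.mpr (fun hc => hg0 (by
        rw [eq_C_of_natDegree_eq_zero h, hc, map_zero])))
    by_cases hfd1 : f.natDegree = 1
    · exact rootCase f g hfg hfd1
    by_cases hgd1 : g.natDegree = 1
    · exact rootCase g f (by rw [hfg, mul_comm]) hgd1
    have hf2 : f.natDegree = 2 := by omega
    have hg2 : g.natDegree = 2 := by omega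
    -- normalize the two quadratic factors to be monic
    set f2 := f.coeff 2 with hf2def
    set g2 := g.coeff 2 with hg2def
    have hlcf : f.leadingCoeff = f2 := by rw [leadingCoeff, hf2]
    have hlcg : g.leadingCoeff = g2 := by rw [leadingCoeff, hg2]
    have hprodlc : f2 * g2 = 1 := by
      rw [← hlcf, ← hlcg, ← leadingCoeff_mul, ← hfg, hmon.leadingCoeff]
    have hC : C f2 * C g2 = 1 := by rw [← C_mul, hprodlc, C_1]
    set s := g2 * f.coeff 1 with hs
    set t := g2 * f.coeff 0 with ht
    set u := f2 * g.coeff 1 with hu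
    set v := f2 * g.coeff 0 with hv
    have hfac : Pm = (X^2 + C s * X + C t) * (X^2 + C u * X + C v) := by
      rw [hfg, eq_quadratic hf2.le, eq_quadratic hg2.le, hs, ht, hu, hv]
      simp only [C_mul]
      linear_combination (X^4 - C (f.coeff 1) * C (g.coeff 1) * X^2
        - (C (f.coeff 1) * C (g.coeff 0) + C (f.coeff 0) * C (g.coeff 1)) * X
        - C (f.coeff 0) * C (g.coeff 0)) * hC
    rw [quad_mul_expand] at hfac
    obtain ⟨hc3, hc2, hc1, hc0⟩ := quartic_coeffs_eq (hPform.symm.trans hfac)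
    -- hc3 : -az = s + u, hc2 : bz = t+v+s*u, hc1 : -(pz*az) = s*v+u*t, hc0 : pz^2 = t*v
    have hΔfac : (Δ : ZMod ℓ) = (s^2-4*t) * (u^2-4*v)
        * ((u-s)^2*t - s*(u-s)*(v-t) + (v-t)^2)^2 := by
      rw [hDz]
      exact quartic_disc_factor s t u v az bz (pz*az) (pz^2)
        (by linear_combination -hc3) hc2 (by linear_combination -hc1) hc0
    -- a square quadratic discriminant would give a root
    have quadRoot : ∀ s' t' u' v' : ZMod ℓ,
        Pm = (X^2 + C s' * X + C t') * (X^2 + C u' * X + C v') →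
        IsSquare (s'^2 - 4*t') → False := by
      intro s' t' u' v' hfac' ⟨w, hw⟩
      apply noRoot ((w - s')/2)
      rw [hfac', eval_mul]
      have : eval ((w - s')/2) (X^2 + C s' * X + C t') = 0 := by
        simp only [eval_add, eval_mul, eval_pow, eval_C, eval_X]
        have hinv : (2:ZMod ℓ)⁻¹ * 2 = 1 := inv_mul_cancel₀ h2z
        linear_combination (-(s'*(w-s')*(2:ZMod ℓ)⁻¹ + t'*(2*(2:ZMod ℓ)⁻¹+1))) * hinv
          + (-(2:ZMod ℓ)⁻¹*(2:ZMod ℓ)⁻¹) * hw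
      rw [this, zero_mul]
    have hfacX : Pm = (X^2 + C s * X + C t) * (X^2 + C u * X + C v) := by
      rw [hfac, ← quad_mul_expand]
    by_cases hd1 : IsSquare (s^2 - 4*t)
    · exact quadRoot s t u v hfacX hd1
    by_cases hd2 : IsSquare (u^2 - 4*v)
    · exact quadRoot u v s t (by rw [hfacX, mul_comm]) hd2
    obtain ⟨m, hm⟩ := nonsquare_mul hd1 hd2
    exact hΔns ⟨m * ((u-s)^2*t - s*(u-s)*(v-t) + (v-t)^2), by
      rw [hΔfac, hm]; ring⟩
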